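/- arXiv:2401.10628 — 2 statements merged into one kernel-verified Lean document; each statement's English description precedes it below -/
import Mathlib

section
/- Let Γ be a compact Lie group acting orthogonally on ℝⁿ and let F ∈ 𝓤_{n,r}(Γ) be a Γ-invariant r-unfolding of f ∈ 𝓜ₙ(Γ). Then 𝓜ₙ(Γ) = T_{O_f} + T_{S_F} (equality of ℝ-subspaces of 𝓜ₙ(Γ)) if and only if 𝓔ₙ(Γ) = T^ext_{O_f} + span_ℝ{1, α₁(F), …, α_r(F)}. -/
open Filter Topology Pointwise RealInnerProductSpace

noncomputable section

/-- ℝⁿ, as a Euclidean space. -/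
abbrev Euc (n : ℕ) : Type := EuclideanSpace ℝ (Fin n)

/-- The germs at `0` of real-valued functions on ℝⁿ. -/
abbrev Ger (n : ℕ) : Type := Filter.Germ (𝓝 (0 : Euc n)) ℝ

/-- A function between normed spaces defines a smooth germ at `0`:
it is `C^∞` on some neighbourhood of `0`. -/
def SmoothNear {A B : Type} [NormedAddCommGroup A] [NormedSpace ℝ A]
    [NormedAddCommGroup B] [NormedSpace ℝ B] (f : A → B) : Prop :=
  ∃ U ∈ 𝓝 (0 : A), ContDiffOn ℝ (⊤ : ℕ∞) f U

variable {n r d : ℕ} {G : Type} [Group G]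

/-- Γ-invariance of (the germ at `0` of) `f : ℝⁿ → ℝ`. -/
def InvNear (ρ : G →* (Euc n ≃ₗᵢ[ℝ] Euc n)) (f : Euc n → ℝ) : Prop :=
  ∀ᶠ x in 𝓝 (0 : Euc n), ∀ γ : G, f (ρ γ x) = f x

/-- Γ-equivariance of (the germ at `0` of) `φ : ℝⁿ → ℝⁿ`. -/
def EqvNear (ρ : G →* (Euc n ≃ₗᵢ[ℝ] Euc n)) (φ : Euc n → Euc n) : Prop :=
  ∀ᶠ x in 𝓝 (0 : Euc n), ∀ γ : G, φ (ρ γ x) = ρ γ (φ x)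

/-- `𝓔ₙ(Γ)`, the set of Γ-invariant smooth germs at `0`. -/
def EnG (ρ : G →* (Euc n ≃ₗᵢ[ℝ] Euc n)) : Set (Ger n) :=
  {h | ∃ f : Euc n → ℝ, SmoothNear f ∧ InvNear ρ f ∧ h = Filter.Germ.ofFun f}

/-- `𝓜ₙᵏ(Γ)`, the Γ-invariant smooth germs whose derivatives of order `< k` vanish at `0`. -/
def MnkG (ρ : G →* (Euc n ≃ₗᵢ[ℝ] Euc n)) (k : ℕ) : Set (Ger n) :=
  {h | ∃ f : Euc n → ℝ, SmoothNear f ∧ InvNear ρ f ∧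
    (∀ i < k, iteratedFDeriv ℝ i f 0 = 0) ∧ h = Filter.Germ.ofFun f}

/-- `𝓜ₙ(Γ) = 𝓜ₙ¹(Γ)`. -/
abbrev MnG (ρ : G →* (Euc n ≃ₗᵢ[ℝ] Euc n)) : Set (Ger n) := MnkG ρ 1

/-- The tangent space `T_{O_f}` to the orbit of `f`: germs `φ·∇f` with `φ` a Γ-equivariant
germ vanishing at `0`. -/
def TOrb (ρ : G →* (Euc n ≃ₗᵢ[ℝ] Euc n)) (f : Euc n → ℝ) : Set (Ger n) :=
  {h | ∃ φ : Euc n → Euc n, SmoothNear φ ∧ EqvNear ρ φ ∧ φ 0 = 0 ∧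
    h = Filter.Germ.ofFun fun x => ⟪φ x, gradient f x⟫}

/-- The extended tangent space `T^ext_{O_f}`: germs `φ·∇f` with `φ` a Γ-equivariant germ. -/
def TOrbExt (ρ : G →* (Euc n ≃ₗᵢ[ℝ] Euc n)) (f : Euc n → ℝ) : Set (Ger n) :=
  {h | ∃ φ : Euc n → Euc n, SmoothNear φ ∧ EqvNear ρ φ ∧
    h = Filter.Germ.ofFun fun x => ⟪φ x, gradient f x⟫}

/-- The Taylor polynomial `j^k f` of order `k` of `f` at `0`, evaluated at `x`. -/
def taylorPoly (f : Euc n → ℝ) (k : ℕ) (x : Euc n) : ℝ :=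
  ∑ i ∈ Finset.range (k + 1), (1 / (i.factorial : ℝ)) * iteratedFDeriv ℝ i f 0 (fun _ => x)

/-- The codimension (in `ℕ∞`) of a subspace `T` inside `M`: the least number of germs that
together with `T` ℝ-linearly span `M`. -/
def codimOf {m : ℕ} (T M : Set (Ger m)) : ℕ∞ :=
  sInf {c : ℕ∞ | ∃ k : ℕ, c = (k : ℕ∞) ∧ ∃ v : Fin k → Ger m,
    M ⊆ {g | ∃ t ∈ T, ∃ a : Fin k → ℝ, g = t + ∑ i, a i • v i}}

/-- The Γ-codimension `cod_Γ(f) = dim_ℝ 𝓜ₙ(Γ)/T^ext_{O_f}`. -/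
def codG (ρ : G →* (Euc n ≃ₗᵢ[ℝ] Euc n)) (f : Euc n → ℝ) : ℕ∞ :=
  codimOf (TOrbExt ρ f) (MnG ρ)

/-- A germ of a diffeomorphism of `(A, 0)` fixing `0`. -/
def GermDiffeo {A : Type} [NormedAddCommGroup A] [NormedSpace ℝ A] (φ : A → A) : Prop :=
  SmoothNear φ ∧ φ 0 = 0 ∧ ∃ ψ : A → A, SmoothNear ψ ∧ ψ 0 = 0 ∧
    (∀ᶠ x in 𝓝 (0 : A), ψ (φ x) = x) ∧ (∀ᶠ x in 𝓝 (0 : A), φ (ψ x) = x)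

/-- `Lₙ(Γ)`: germs of Γ-equivariant diffeomorphisms of `(ℝⁿ, 0)` fixing the origin. -/
def LnG (ρ : G →* (Euc n ≃ₗᵢ[ℝ] Euc n)) (φ : Euc n → Euc n) : Prop :=
  GermDiffeo φ ∧ EqvNear ρ φ

/-- Γ-equivalence of germs: `g = f ∘ φ` for some `φ ∈ Lₙ(Γ)`. -/
def GermEquiv (ρ : G →* (Euc n ≃ₗᵢ[ℝ] Euc n)) (f g : Euc n → ℝ) : Prop :=
  ∃ φ : Euc n → Euc n, LnG ρ φ ∧ ∀ᶠ x in 𝓝 (0 : Euc n), g x = f (φ x)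

/-- Γ-invariance, in the `x`-variable, of (the germ at `0` of) a family `F : ℝⁿ × ℝʳ → ℝ`. -/
def InvNearU (ρ : G →* (Euc n ≃ₗᵢ[ℝ] Euc n)) (F : Euc n × Euc r → ℝ) : Prop :=
  ∀ᶠ p : Euc n × Euc r in 𝓝 0, ∀ γ : G, F (ρ γ p.1, p.2) = F p

/-- `F` is a Γ-invariant `r`-unfolding of `f`. -/
def IsUnfolding (ρ : G →* (Euc n ≃ₗᵢ[ℝ] Euc n)) (f : Euc n → ℝ)
    (F : Euc n × Euc r → ℝ) : Prop :=
  SmoothNear F ∧ (∀ᶠ x in 𝓝 (0 : Euc n), F (x, 0) = f x) ∧ InvNearU ρ F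

/-- `αᵢ(F) = ∂F/∂uᵢ(·, 0)`. -/
def alphaU (F : Euc n × Euc r → ℝ) (i : Fin r) (x : Euc n) : ℝ :=
  gradient (fun u => F (x, u)) 0 i

/-- `span_ℝ {1, α₁(F), …, α_r(F)}`, as a set of germs at `0`. -/
def SpanAlpha (F : Euc n × Euc r → ℝ) : Set (Ger n) :=
  {h | ∃ (c : ℝ) (b : Fin r → ℝ),
    h = Filter.Germ.ofFun fun x => c + ∑ i, b i * alphaU F i x}

/-- `F` is a Γ-transversal unfolding of `f`:
`𝓔ₙ(Γ) = T^ext_{O_f} + span_ℝ {1, α₁(F), …, α_r(F)}`. -/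
def Transversal (ρ : G →* (Euc n ≃ₗᵢ[ℝ] Euc n)) (f : Euc n → ℝ)
    (F : Euc n × Euc r → ℝ) : Prop :=
  EnG ρ = TOrbExt ρ f + SpanAlpha F

/-- The unfolding `Gu` (with `d` parameters) is induced from `F` (with `r` parameters). -/
def InducedFrom (ρ : G →* (Euc n ≃ₗᵢ[ℝ] Euc n)) (F : Euc n × Euc r → ℝ)
    (Gu : Euc n × Euc d → ℝ) : Prop :=
  ∃ (φ : Euc n × Euc d → Euc n) (ψ : Euc d → Euc r) (h : Euc d → ℝ),
    SmoothNear φ ∧ SmoothNear ψ ∧ SmoothNear h ∧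
    φ 0 = 0 ∧ ψ 0 = 0 ∧ h 0 = 0 ∧
    (∀ᶠ p : Euc n × Euc d in 𝓝 0, ∀ γ : G, φ (ρ γ p.1, p.2) = ρ γ (φ p)) ∧
    (∀ᶠ p : Euc n × Euc d in 𝓝 0, Gu p = F (φ p, ψ p.2) + h p.2)

/-- Γ-equivalence of two `r`-unfoldings: induced with a germ diffeomorphism in the parameters. -/
def EquivUnf (ρ : G →* (Euc n ≃ₗᵢ[ℝ] Euc n)) (F Gu : Euc n × Euc r → ℝ) : Prop :=
  ∃ (φ : Euc n × Euc r → Euc n) (ψ : Euc r → Euc r) (h : Euc r → ℝ),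
    SmoothNear φ ∧ GermDiffeo ψ ∧ SmoothNear h ∧
    φ 0 = 0 ∧ h 0 = 0 ∧
    (∀ᶠ p : Euc n × Euc r in 𝓝 0, ∀ γ : G, φ (ρ γ p.1, p.2) = ρ γ (φ p)) ∧
    (∀ᶠ p : Euc n × Euc r in 𝓝 0, Gu p = F (φ p, ψ p.2) + h p.2)

/-- `F` is a versal unfolding of `f`: every Γ-invariant unfolding of `f` is induced from `F`. -/
def Versal (ρ : G →* (Euc n ≃ₗᵢ[ℝ] Euc n)) (f : Euc n → ℝ)
    (F : Euc n × Euc r → ℝ) : Prop :=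
  ∀ (d : ℕ) (Gu : Euc n × Euc d → ℝ), IsUnfolding ρ f Gu → InducedFrom ρ F Gu

/-- `T_{S_F}`: the tangent space generated by the unfolding `F`. -/
def TSF {n r : ℕ} {G : Type} [Group G] (ρ : G →* (Euc n ≃ₗᵢ[ℝ] Euc n))
    (f : Euc n → ℝ) (F : Euc n × Euc r → ℝ) : Set (Ger n) :=
  {h | ∃ v₁ : Euc n, (∀ γ : G, ρ γ v₁ = v₁) ∧ ∃ v₂ : Euc r,
    h = Filter.Germ.ofFun fun x =>
      ⟪v₁, gradient f x - gradient f 0⟫ +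
      ⟪v₂, gradient (fun u => F (x, u)) 0 - gradient (fun u => F (0, u)) 0⟫}

section Aux

variable {n r : ℕ} {G : Type} [Group G]

lemma inner_grad {m : ℕ} (f : Euc m → ℝ) (x v : Euc m) :
    (⟪v, gradient f x⟫ : ℝ) = fderiv ℝ f x v := by
  rw [real_inner_comm]
  exact InnerProductSpace.toDual_symm_apply

lemma inner_euc {m : ℕ} (v w : Euc m) : (⟪v, w⟫ : ℝ) = ∑ i, v i * w i := by
  simp [PiLp.inner_apply, RCLike.inner_apply, conj_trivial]
  exact Finset.sum_congr rfl fun i _ => mul_comm _ _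

lemma germ_add_ofFun (f g : Euc n → ℝ) :
    (Filter.Germ.ofFun f + Filter.Germ.ofFun g : Ger n)
      = Filter.Germ.ofFun (fun x => f x + g x) := rfl

lemma germ_eq_iff (f g : Euc n → ℝ) :
    (Filter.Germ.ofFun f : Ger n) = Filter.Germ.ofFun g ↔ f =ᶠ[𝓝 (0 : Euc n)] g :=
  Filter.Germ.coe_eq

lemma smoothNear_const {A B : Type} [NormedAddCommGroup A] [NormedSpace ℝ A]
    [NormedAddCommGroup B] [NormedSpace ℝ B] (c : B) : SmoothNear (fun _ : A => c) :=
  ⟨Set.univ, Filter.univ_mem, contDiffOn_const⟩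

lemma SmoothNear.add' {A B : Type} [NormedAddCommGroup A] [NormedSpace ℝ A]
    [NormedAddCommGroup B] [NormedSpace ℝ B] {f g : A → B}
    (hf : SmoothNear f) (hg : SmoothNear g) : SmoothNear fun x => f x + g x := by
  obtain ⟨U, hU, h1⟩ := hf; obtain ⟨V, hV, h2⟩ := hg
  exact ⟨U ∩ V, Filter.inter_mem hU hV,
    (h1.mono Set.inter_subset_left).add (h2.mono Set.inter_subset_right)⟩

lemma SmoothNear.sub' {A B : Type} [NormedAddCommGroup A] [NormedSpace ℝ A]
    [NormedAddCommGroup B] [NormedSpace ℝ B] {f g : A → B}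
    (hf : SmoothNear f) (hg : SmoothNear g) : SmoothNear fun x => f x - g x := by
  obtain ⟨U, hU, h1⟩ := hf; obtain ⟨V, hV, h2⟩ := hg
  exact ⟨U ∩ V, Filter.inter_mem hU hV,
    (h1.mono Set.inter_subset_left).sub (h2.mono Set.inter_subset_right)⟩

lemma eqv_fixes_origin {ρ : G →* (Euc n ≃ₗᵢ[ℝ] Euc n)} {φ : Euc n → Euc n}
    (hφ : EqvNear ρ φ) (γ : G) : ρ γ (φ 0) = φ 0 := by
  have h := hφ.self_of_nhds γ
  simpa using h.symm

lemma fderiv_eqv (ρ : G →* (Euc n ≃ₗᵢ[ℝ] Euc n)) {f : Euc n → ℝ}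
    (hf : SmoothNear f) (hinv : InvNear ρ f) :
    ∀ᶠ x in 𝓝 (0 : Euc n), ∀ (γ : G) (v : Euc n),
      fderiv ℝ f (ρ γ x) (ρ γ v) = fderiv ℝ f x v := by
  obtain ⟨U, hU, hcd⟩ := hf
  have hball : ∃ ε > 0, ∀ y ∈ Metric.ball (0 : Euc n) ε,
      (∀ γ : G, f (ρ γ y) = f y) ∧ y ∈ interior U := by
    rw [← Metric.eventually_nhds_iff_ball]
    exact hinv.and (Filter.eventually_mem_set.mpr (interior_mem_nhds.mpr hU))
  obtain ⟨ε, hε, hb⟩ := hball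
  rw [Metric.eventually_nhds_iff_ball]
  refine ⟨ε, hε, fun x hx γ v => ?_⟩
  set e := ρ γ with he
  have hdiff : ∀ y ∈ Metric.ball (0 : Euc n) ε, DifferentiableAt ℝ f y := fun y hy =>
    ((hcd.mono interior_subset).differentiableOn (by simp)).differentiableAt
      (isOpen_interior.mem_nhds (hb y hy).2)
  have hex : e x ∈ Metric.ball (0 : Euc n) ε := by
    rw [mem_ball_zero_iff] at hx ⊢
    rwa [e.norm_map]
  have heq : (fun y => f (e y)) =ᶠ[𝓝 x] f := by
    filter_upwards [Metric.isOpen_ball.mem_nhds hx] with y hy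
    exact (hb y hy).1 γ
  have chain : HasFDerivAt (fun y => f (e y))
      ((fderiv ℝ f (e x)).comp (e.toContinuousLinearEquiv : Euc n →L[ℝ] Euc n)) x :=
    (hdiff (e x) hex).hasFDerivAt.comp x
      ((e.toContinuousLinearEquiv : Euc n →L[ℝ] Euc n).hasFDerivAt)
  have key : (fderiv ℝ f (e x)).comp (e.toContinuousLinearEquiv : Euc n →L[ℝ] Euc n)
      = fderiv ℝ f x := by
    rw [← chain.fderiv]; exact heq.fderiv_eq
  calc fderiv ℝ f (e x) (e v)
      = ((fderiv ℝ f (e x)).comp (e.toContinuousLinearEquiv : Euc n →L[ℝ] Euc n)) v := rfl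
    _ = fderiv ℝ f x v := by rw [key]

lemma A_inv (ρ : G →* (Euc n ≃ₗᵢ[ℝ] Euc n)) {F : Euc n × Euc r → ℝ}
    (hinv : InvNearU ρ F) :
    ∀ᶠ x in 𝓝 (0 : Euc n), ∀ γ : G,
      gradient (fun u => F (ρ γ x, u)) 0 = gradient (fun u => F (x, u)) 0 := by
  have hinv' : ∀ᶠ p : Euc n × Euc r in 𝓝 0, ∀ γ : G, F (ρ γ p.1, p.2) = F p := hinv
  rw [Metric.eventually_nhds_iff_ball] at hinv'
  obtain ⟨ε, hε, hb⟩ := hinv'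
  refine Metric.eventually_nhds_iff_ball.mpr ⟨ε, hε, fun x hx γ => ?_⟩
  refine Filter.EventuallyEq.gradient_eq ?_
  filter_upwards [Metric.ball_mem_nhds (0 : Euc r) hε] with u hu
  have hmem : ((x, u) : Euc n × Euc r) ∈ Metric.ball (0 : Euc n × Euc r) ε := by
    rw [mem_ball_zero_iff] at hx hu ⊢
    rw [Prod.norm_def]
    exact max_lt hx hu
  exact hb _ hmem γ

lemma fderiv_partial {F : Euc n × Euc r → ℝ} (hF : SmoothNear F) :
    ∃ V ∈ 𝓝 (0 : Euc n), IsOpen V ∧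
      (∀ x ∈ V, fderiv ℝ (fun u => F (x, u)) 0
        = (fderiv ℝ F (x, 0)).comp (ContinuousLinearMap.inr ℝ (Euc n) (Euc r))) ∧
      ContDiffOn ℝ (⊤ : ℕ∞) (fun x : Euc n => fderiv ℝ F (x, 0)) V := by
  obtain ⟨U, hU, hcd⟩ := hF
  have hWo : IsOpen (interior U) := isOpen_interior
  have hcd' : ContDiffOn ℝ (⊤ : ℕ∞) F (interior U) := hcd.mono interior_subset
  have hVo : IsOpen ((fun x : Euc n => (x, (0 : Euc r))) ⁻¹' interior U) :=
    hWo.preimage (continuous_id.prodMk continuous_const)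
  have hV0 : (0 : Euc n) ∈ (fun x : Euc n => (x, (0 : Euc r))) ⁻¹' interior U := by
    have : ((0 : Euc n), (0 : Euc r)) = (0 : Euc n × Euc r) := rfl
    simp only [Set.mem_preimage, this]
    exact mem_interior_iff_mem_nhds.mpr hU
  refine ⟨_, hVo.mem_nhds hV0, hVo, fun x hx => ?_, ?_⟩
  · have hdF : HasFDerivAt F (fderiv ℝ F (x, 0)) (x, 0) :=
      ((hcd'.differentiableOn (by simp)).differentiableAt (hWo.mem_nhds hx)).hasFDerivAt
    exact (hdF.comp 0 (hasFDerivAt_prodMk_right x 0)).fderiv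
  · have h1 : ContDiffOn ℝ (⊤ : ℕ∞) (fderiv ℝ F) (interior U) :=
      hcd'.fderiv_of_isOpen hWo (le_of_eq rfl)
    exact h1.comp ((contDiff_id.prodMk contDiff_const).contDiffOn) (fun x hx => hx)

lemma smooth_inner_grad {f : Euc n → ℝ} {φ : Euc n → Euc n}
    (hf : SmoothNear f) (hφ : SmoothNear φ) :
    SmoothNear (fun x => (⟪φ x, gradient f x⟫ : ℝ)) := by
  obtain ⟨U, hU, hcd⟩ := hf
  obtain ⟨U', hU', hcd'⟩ := hφ
  refine ⟨interior U ∩ interior U',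
    Filter.inter_mem (interior_mem_nhds.mpr hU) (interior_mem_nhds.mpr hU'), ?_⟩
  have h1 : ContDiffOn ℝ (⊤ : ℕ∞) (fderiv ℝ f) (interior U ∩ interior U') :=
    ((hcd.mono interior_subset).fderiv_of_isOpen isOpen_interior (le_of_eq rfl)).mono
      Set.inter_subset_left
  have h2 : ContDiffOn ℝ (⊤ : ℕ∞) φ (interior U ∩ interior U') :=
    (hcd'.mono interior_subset).mono Set.inter_subset_right
  exact (h1.clm_apply h2).congr fun x _ => inner_grad f x (φ x)

lemma smooth_inner_A {F : Euc n × Euc r → ℝ} (hF : SmoothNear F) (w : Euc r) :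
    SmoothNear (fun x : Euc n => (⟪w, gradient (fun u => F (x, u)) 0⟫ : ℝ)) := by
  obtain ⟨V, hV, _, hfd, hcd⟩ := fderiv_partial hF
  refine ⟨V, hV, ?_⟩
  have h1 : ContDiffOn ℝ (⊤ : ℕ∞) (fun x : Euc n => fderiv ℝ F (x, 0) ((0 : Euc n), w)) V :=
    hcd.clm_apply contDiffOn_const
  refine h1.congr fun x hx => ?_
  rw [inner_grad, hfd x hx]
  rfl

lemma inv_inner_grad (ρ : G →* (Euc n ≃ₗᵢ[ℝ] Euc n)) {f : Euc n → ℝ} {φ : Euc n → Euc n}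
    (hf : SmoothNear f) (hfinv : InvNear ρ f) (hφe : EqvNear ρ φ) :
    InvNear ρ (fun x => (⟪φ x, gradient f x⟫ : ℝ)) := by
  filter_upwards [fderiv_eqv ρ hf hfinv, hφe] with x h1 h2 γ
  rw [inner_grad, inner_grad, h2 γ, h1 γ (φ x)]

lemma mem_MnG_iff {ρ : G →* (Euc n ≃ₗᵢ[ℝ] Euc n)} {h : Ger n} :
    h ∈ MnG ρ ↔ ∃ f : Euc n → ℝ, SmoothNear f ∧ InvNear ρ f ∧ f 0 = 0 ∧
      h = Filter.Germ.ofFun f := by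
  constructor
  · rintro ⟨f, hs, hi, hd, he⟩
    refine ⟨f, hs, hi, ?_, he⟩
    have h2 : iteratedFDeriv ℝ 0 f 0 (fun _ => 0) = 0 := by
      rw [hd 0 (by norm_num)]; rfl
    simpa [iteratedFDeriv_zero_apply] using h2
  · rintro ⟨f, hs, hi, h0, he⟩
    refine ⟨f, hs, hi, ?_, he⟩
    intro i hi1
    obtain rfl : i = 0 := Nat.lt_one_iff.mp hi1
    exact ContinuousMultilinearMap.ext fun m => by
      simp [iteratedFDeriv_zero_apply, h0]

lemma smooth_inv_span (ρ : G →* (Euc n ≃ₗᵢ[ℝ] Euc n)) {F : Euc n × Euc r → ℝ}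
    (hFs : SmoothNear F) (hFi : InvNearU ρ F) (c : ℝ) (b : Fin r → ℝ) :
    SmoothNear (fun x : Euc n => c + ∑ i, b i * alphaU F i x) ∧
    InvNear ρ (fun x : Euc n => c + ∑ i, b i * alphaU F i x) := by
  set bv : Euc r := (WithLp.equiv 2 (Fin r → ℝ)).symm b with hbv
  have hfun : (fun x : Euc n => c + ∑ i, b i * alphaU F i x)
      = fun x => c + ⟪bv, gradient (fun u => F (x, u)) 0⟫ := by
    funext x
    rw [inner_euc]
    simp [alphaU, hbv, WithLp.equiv_symm_apply, PiLp.toLp_apply]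
  rw [hfun]
  refine ⟨(smoothNear_const c).add' (smooth_inner_A hFs bv), ?_⟩
  filter_upwards [A_inv ρ hFi] with x hx γ
  simp only [hx γ]

end Aux

/-- `𝓜ₙ(Γ) = T_{O_f} + T_{S_F}` iff
`𝓔ₙ(Γ) = T^ext_{O_f} + span_ℝ{1, α₁(F), …, α_r(F)}`. -/
theorem statement5 {n r : ℕ} {G : Type} [Group G] [TopologicalSpace G]
    [IsTopologicalGroup G] [CompactSpace G]
    (ρ : G →* (Euc n ≃ₗᵢ[ℝ] Euc n))
    (f : Euc n → ℝ) (hf : SmoothNear f) (hfinv : InvNear ρ f) (hf0 : f 0 = 0)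
    (F : Euc n × Euc r → ℝ) (hF : IsUnfolding ρ f F) :
    MnG ρ = TOrb ρ f + TSF ρ f F ↔ EnG ρ = TOrbExt ρ f + SpanAlpha F := by
  obtain ⟨hFs, hFf, hFi⟩ := hF
  constructor
  · intro hM
    apply Set.Subset.antisymm
    · rintro h ⟨g, hgs, hgi, hge⟩
      have hg' : (Filter.Germ.ofFun (fun x => g x - g 0) : Ger n) ∈ MnG ρ := by
        refine mem_MnG_iff.mpr ⟨_, hgs.sub' (smoothNear_const _), ?_, sub_self _, rfl⟩
        filter_upwards [hgi] with x hx γ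
        rw [hx γ]
      rw [hM, Set.mem_add] at hg'
      obtain ⟨t, ⟨φ, hφs, hφe, hφ0, rfl⟩, s, ⟨v₁, hv₁, v₂, rfl⟩, hts⟩ := hg'
      rw [germ_add_ofFun, germ_eq_iff] at hts
      refine Set.mem_add.mpr ⟨_, ⟨fun x => φ x + v₁, hφs.add' (smoothNear_const v₁), ?_, rfl⟩,
        _, ⟨g 0 - ⟪v₁, gradient f 0⟫ - ⟪v₂, gradient (fun u => F ((0 : Euc n), u)) 0⟫,
          WithLp.equiv 2 (Fin r → ℝ) v₂, rfl⟩, ?_⟩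
      · filter_upwards [hφe] with x hx γ
        simp only [hx γ, map_add, hv₁ γ]
      · rw [hge, germ_add_ofFun, germ_eq_iff]
        filter_upwards [hts] with x hx
        have hsx : ∑ i, (WithLp.equiv 2 (Fin r → ℝ)) v₂ i * alphaU F i x
            = ⟪v₂, gradient (fun u => F (x, u)) 0⟫ := by
          rw [inner_euc]
          simp [alphaU, WithLp.equiv_apply]
        simp only [inner_add_left, inner_sub_right] at hx ⊢
        rw [hsx]
        linarith [hx]
    · rintro h hh
      rw [Set.mem_add] at hh
      obtain ⟨t, ⟨φ, hφs, hφe, rfl⟩, s, ⟨c, b, rfl⟩, rfl⟩ := hh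
      rw [germ_add_ofFun]
      obtain ⟨hs1, hs2⟩ := smooth_inv_span ρ hFs hFi c b
      refine ⟨_, (smooth_inner_grad hf hφs).add' hs1, ?_, rfl⟩
      filter_upwards [inv_inner_grad ρ hf hfinv hφe, hs2] with x h1 h2 γ
      have e1 := h1 γ
      have e2 := h2 γ
      beta_reduce at e1 e2 ⊢
      rw [e1, e2]
  · intro hE
    apply Set.Subset.antisymm
    · intro h hh
      obtain ⟨g, hgs, hgi, hg0, hge⟩ := mem_MnG_iff.mp hh
      have hh' : h ∈ EnG ρ := ⟨g, hgs, hgi, hge⟩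
      rw [hE, Set.mem_add] at hh'
      obtain ⟨t, ⟨φ, hφs, hφe, rfl⟩, s, ⟨c, b, rfl⟩, hts⟩ := hh'
      rw [hge, germ_add_ofFun, germ_eq_iff] at hts
      have h0 := hts.eq_of_nhds
      refine Set.mem_add.mpr ⟨_,
        ⟨fun x => φ x - φ 0, hφs.sub' (smoothNear_const _), ?_, sub_self _, rfl⟩,
        _, ⟨φ 0, fun γ => eqv_fixes_origin hφe γ,
          (WithLp.equiv 2 (Fin r → ℝ)).symm b, rfl⟩, ?_⟩
      · filter_upwards [hφe] with x hx γ
        simp only [hx γ, map_sub, eqv_fixes_origin hφe γ]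
      · rw [hge, germ_add_ofFun, germ_eq_iff]
        filter_upwards [hts] with x hx
        have hsx : (⟪(WithLp.equiv 2 (Fin r → ℝ)).symm b, gradient (fun u => F (x, u)) 0⟫ : ℝ)
            = ∑ i, b i * alphaU F i x := by
          rw [inner_euc]
          simp [alphaU, WithLp.equiv_symm_apply, PiLp.toLp_apply]
        have hs0 : (⟪(WithLp.equiv 2 (Fin r → ℝ)).symm b,
              gradient (fun u => F ((0 : Euc n), u)) 0⟫ : ℝ)
            = ∑ i, b i * alphaU F i 0 := by
          rw [inner_euc]
          simp [alphaU, WithLp.equiv_symm_apply, PiLp.toLp_apply]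
        beta_reduce at h0 hx ⊢
        simp only [inner_sub_left, inner_sub_right, hsx, hs0]
        rw [hg0] at h0
        linarith [hx, h0]
    · rintro h hh
      rw [Set.mem_add] at hh
      obtain ⟨t, ⟨φ, hφs, hφe, hφ0, rfl⟩, s, ⟨v₁, hv₁, v₂, rfl⟩, rfl⟩ := hh
      rw [germ_add_ofFun]
      refine mem_MnG_iff.mpr ⟨_, ?_, ?_, ?_, rfl⟩
      · refine (smooth_inner_grad hf hφs).add' ?_
        have heq : (fun x : Euc n => (⟪v₁, gradient f x - gradient f 0⟫ : ℝ)
              + ⟪v₂, gradient (fun u => F (x, u)) 0 - gradient (fun u => F ((0 : Euc n), u)) 0⟫)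
            = fun x => ((⟪v₁, gradient f x⟫ : ℝ) - ⟪v₁, gradient f 0⟫)
              + ((⟪v₂, gradient (fun u => F (x, u)) 0⟫ : ℝ)
                - ⟪v₂, gradient (fun u => F ((0 : Euc n), u)) 0⟫) := by
          funext x; rw [inner_sub_right, inner_sub_right]
        rw [heq]
        exact ((smooth_inner_grad hf (smoothNear_const v₁)).sub' (smoothNear_const _)).add'
          ((smooth_inner_A hFs v₂).sub' (smoothNear_const _))
      · filter_upwards [fderiv_eqv ρ hf hfinv, A_inv ρ hFi, hφe] with x h1 h2 h3 γ
        have e1 : fderiv ℝ f (ρ γ x) v₁ = fderiv ℝ f x v₁ := by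
          have := h1 γ v₁; rwa [hv₁ γ] at this
        have a1 : (⟪φ (ρ γ x), gradient f (ρ γ x)⟫ : ℝ) = ⟪φ x, gradient f x⟫ := by
          rw [inner_grad, inner_grad, h3 γ, h1 γ (φ x)]
        have a2 : (⟪v₁, gradient f (ρ γ x)⟫ : ℝ) = ⟪v₁, gradient f x⟫ := by
          rw [inner_grad, inner_grad]; exact e1
        simp only [inner_sub_right, a1, a2, h2 γ]
      · simp [hφ0]

end
end

section
/- Let Γ be a compact Lie group acting orthogonally on ℝⁿ, let F ∈ 𝓤_{n,r}(Γ) be a Γ-transversal unfolding of a germ f ∈ 𝓜ₙ(Γ), and let φ ∈ Lₙ(Γ). Then the unfolding G(x,u) = F(φ(x),u) is a Γ-transversal unfolding of the germ g = f∘φ. -/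
open Filter Topology Pointwise RealInnerProductSpace

noncomputable section

variable {n r d : ℕ} {G : Type} [Group G]

section Helpers

open Metric

lemma smoothNear_ball {A B : Type} [NormedAddCommGroup A] [NormedSpace ℝ A]
    [NormedAddCommGroup B] [NormedSpace ℝ B] {f : A → B} (hf : SmoothNear f) :
    ∃ ε > 0, ContDiffOn ℝ (⊤ : ℕ∞) f (ball (0:A) ε) := by
  obtain ⟨U, hU, h⟩ := hf
  obtain ⟨ε, hε, hb⟩ := Metric.mem_nhds_iff.1 hU
  exact ⟨ε, hε, h.mono hb⟩

lemma eventually_ball' {A : Type} [PseudoMetricSpace A] {x : A} {p : A → Prop}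
    (h : ∀ᶠ y in 𝓝 x, p y) : ∃ ε > 0, ∀ y ∈ ball x ε, p y := by
  obtain ⟨ε, hε, hb⟩ := Metric.mem_nhds_iff.1 h
  exact ⟨ε, hε, fun y hy => hb hy⟩

lemma contDiffOn_ball_continuousAt {A B : Type} [NormedAddCommGroup A] [NormedSpace ℝ A]
    [NormedAddCommGroup B] [NormedSpace ℝ B] {f : A → B} {ε : ℝ} (hε : 0 < ε)
    (h : ContDiffOn ℝ (⊤:ℕ∞) f (ball (0:A) ε)) : ContinuousAt f 0 :=
  h.continuousOn.continuousAt (ball_mem_nhds _ hε)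

lemma shrink' {A B : Type} [PseudoMetricSpace A] [PseudoMetricSpace B]
    {θ : A → B} {x₀ : A} {y₀ : B} (hc : ContinuousAt θ x₀) (h0 : θ x₀ = y₀)
    {δ r : ℝ} (hδ : 0 < δ) (hr : 0 < r) :
    ∃ η > 0, η ≤ r ∧ ∀ x ∈ ball x₀ η, θ x ∈ ball y₀ δ := by
  have hpre : θ ⁻¹' (ball y₀ δ) ∈ 𝓝 x₀ := by
    apply hc.preimage_mem_nhds
    rw [h0]
    exact ball_mem_nhds _ hδ
  obtain ⟨ε, hε, hb⟩ := Metric.mem_nhds_iff.1 hpre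
  refine ⟨min ε r, lt_min hε hr, min_le_right _ _, fun x hx => hb ?_⟩
  exact ball_subset_ball (min_le_left _ _) hx

variable {n : ℕ} {G : Type} [Group G]

lemma rho_mem_ball (ρ : G →* (Euc n ≃ₗᵢ[ℝ] Euc n)) (γ : G) {x : Euc n} {ε : ℝ}
    (hx : x ∈ ball (0:Euc n) ε) : ρ γ x ∈ ball (0:Euc n) ε := by
  rw [mem_ball_zero_iff] at hx ⊢
  rwa [LinearIsometryEquiv.norm_map]

lemma diffAt_of_ball {A B : Type} [NormedAddCommGroup A] [NormedSpace ℝ A]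
    [NormedAddCommGroup B] [NormedSpace ℝ B] {f : A → B} {ε : ℝ}
    (h : ContDiffOn ℝ (⊤:ℕ∞) f (ball (0:A) ε)) {x : A} (hx : x ∈ ball (0:A) ε) :
    DifferentiableAt ℝ f x :=
  (h.differentiableOn (by simp)).differentiableAt (isOpen_ball.mem_nhds hx)

lemma inner_gradient {h : Euc n → ℝ} {x v : Euc n} :
    ⟪v, gradient h x⟫ = fderiv ℝ h x v := by
  rw [real_inner_comm]
  exact InnerProductSpace.toDual_symm_apply

lemma gradient_congr_ball {h₁ h₂ : Euc n → ℝ} {ε : ℝ}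
    (heq : ∀ x ∈ ball (0:Euc n) ε, h₁ x = h₂ x)
    {y : Euc n} (hy : y ∈ ball (0:Euc n) ε) : gradient h₁ y = gradient h₂ y := by
  have h : h₁ =ᶠ[𝓝 y] h₂ := Filter.eventuallyEq_of_mem (isOpen_ball.mem_nhds hy) heq
  unfold gradient
  rw [h.fderiv_eq]

/-- The continuous linear map underlying `ρ γ`. -/
def rhoCLM (ρ : G →* (Euc n ≃ₗᵢ[ℝ] Euc n)) (γ : G) : Euc n →L[ℝ] Euc n :=
  (ρ γ).toLinearIsometry.toContinuousLinearMap

@[simp] lemma rhoCLM_apply (ρ : G →* (Euc n ≃ₗᵢ[ℝ] Euc n)) (γ : G) (x : Euc n) :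
    rhoCLM ρ γ x = ρ γ x := rfl

lemma fderiv_eqv_s16 (ρ : G →* (Euc n ≃ₗᵢ[ℝ] Euc n)) {θ : Euc n → Euc n} {ε : ℝ}
    (hθ : ContDiffOn ℝ (⊤:ℕ∞) θ (ball (0:Euc n) ε))
    (heqv : ∀ x ∈ ball (0:Euc n) ε, ∀ γ : G, θ (ρ γ x) = ρ γ (θ x)) :
    ∀ x ∈ ball (0:Euc n) ε, ∀ (γ : G) (v : Euc n),
      fderiv ℝ θ (ρ γ x) (ρ γ v) = ρ γ (fderiv ℝ θ x v) := by
  intro x hx γ v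
  have h1 : (fun y => θ (ρ γ y)) =ᶠ[𝓝 x] (fun y => ρ γ (θ y)) :=
    Filter.eventuallyEq_of_mem (isOpen_ball.mem_nhds hx)
      (fun y hy => heqv y hy γ)
  have d1 : DifferentiableAt ℝ θ (ρ γ x) := diffAt_of_ball hθ (rho_mem_ball ρ γ hx)
  have d2 : DifferentiableAt ℝ θ x := diffAt_of_ball hθ hx
  have hLd : DifferentiableAt ℝ (fun y : Euc n => (ρ γ) y) x := (rhoCLM ρ γ).differentiableAt
  have hL : ∀ z : Euc n, fderiv ℝ (fun y : Euc n => (ρ γ) y) z = rhoCLM ρ γ :=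
    fun z => (rhoCLM ρ γ).fderiv
  have e1 : fderiv ℝ (fun y => θ (ρ γ y)) x = (fderiv ℝ θ (ρ γ x)).comp (rhoCLM ρ γ) := by
    have h := fderiv_comp (g := θ) (f := fun y : Euc n => (ρ γ) y) x d1
      ((rhoCLM ρ γ).differentiableAt)
    rw [hL] at h
    exact h
  have e2 : fderiv ℝ (fun y => ρ γ (θ y)) x = (rhoCLM ρ γ).comp (fderiv ℝ θ x) := by
    have h := fderiv_comp (g := fun y : Euc n => (ρ γ) y) (f := θ) x
      ((rhoCLM ρ γ).differentiableAt) d2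
    rw [hL] at h
    exact h
  have key : (fderiv ℝ θ (ρ γ x)).comp (rhoCLM ρ γ) = (rhoCLM ρ γ).comp (fderiv ℝ θ x) := by
    rw [← e1, ← e2]; exact h1.fderiv_eq
  have := congrArg (fun (L : Euc n →L[ℝ] Euc n) => L v) key
  simpa using this

lemma smoothNear_comp {B : Type} [NormedAddCommGroup B] [NormedSpace ℝ B]
    {e : Euc n → B} {θ : Euc n → Euc n}
    (he : SmoothNear e) (hθ : SmoothNear θ) (h0 : θ 0 = 0) :
    SmoothNear (fun y => e (θ y)) := by
  obtain ⟨δ, hδ, hes⟩ := smoothNear_ball he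
  obtain ⟨ε, hε, hθs⟩ := smoothNear_ball hθ
  obtain ⟨η, hη, hηε, hmap⟩ := shrink' (contDiffOn_ball_continuousAt hε hθs) h0 hδ hε
  exact ⟨ball 0 η, ball_mem_nhds _ hη,
    hes.comp (hθs.mono (ball_subset_ball hηε)) hmap⟩

lemma invNear_comp (ρ : G →* (Euc n ≃ₗᵢ[ℝ] Euc n)) {e : Euc n → ℝ} {θ : Euc n → Euc n}
    (he : InvNear ρ e) (hθc : ContinuousAt θ 0) (h0 : θ 0 = 0) (hθe : EqvNear ρ θ) :
    InvNear ρ (fun y => e (θ y)) := by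
  obtain ⟨δ, hδ, hei⟩ := eventually_ball' he
  obtain ⟨ε, hε, hθi⟩ := eventually_ball' hθe
  obtain ⟨η, hη, hηε, hmap⟩ := shrink' hθc h0 hδ hε
  refine Filter.eventually_of_mem (ball_mem_nhds _ hη) (fun y hy γ => ?_)
  show e (θ (ρ γ y)) = e (θ y)
  rw [hθi y (ball_subset_ball hηε hy) γ, hei (θ y) (hmap y hy) γ]

/-- Equivariance of the inverse germ. -/
lemma inverse_eqv (ρ : G →* (Euc n ≃ₗᵢ[ℝ] Euc n)) {φ ψ : Euc n → Euc n} {ε δ : ℝ}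
    (hδε : δ ≤ ε)
    (hφe : ∀ x ∈ ball (0:Euc n) ε, ∀ γ : G, φ (ρ γ x) = ρ γ (φ x))
    (hψφ : ∀ x ∈ ball (0:Euc n) ε, ψ (φ x) = x)
    (hφψ : ∀ x ∈ ball (0:Euc n) ε, φ (ψ x) = x)
    (hmap : ∀ x ∈ ball (0:Euc n) δ, ψ x ∈ ball (0:Euc n) ε) :
    ∀ x ∈ ball (0:Euc n) δ, ∀ γ : G, ψ (ρ γ x) = ρ γ (ψ x) := by
  intro x hx γ
  have hψx : ψ x ∈ ball (0:Euc n) ε := hmap x hx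
  have h1 : φ (ρ γ (ψ x)) = ρ γ x := by
    rw [hφe (ψ x) hψx γ, hφψ x (ball_subset_ball hδε hx)]
  calc ψ (ρ γ x) = ψ (φ (ρ γ (ψ x))) := by rw [h1]
    _ = ρ γ (ψ x) := hψφ _ (rho_mem_ball ρ γ hψx)

/-- Key transfer lemma: a tangent-orbit generator for `f₀`, composed with `θ`,
is a tangent-orbit generator for `f₀ ∘ θ`. -/
lemma transfer (ρ : G →* (Euc n ≃ₗᵢ[ℝ] Euc n))
    {θ θ' : Euc n → Euc n} {f₀ : Euc n → ℝ} {χ : Euc n → Euc n}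
    {ε δ : ℝ} (hδ : 0 < δ) (hδε : δ ≤ ε)
    (hθs : ContDiffOn ℝ (⊤:ℕ∞) θ (ball (0:Euc n) ε))
    (hθ's : ContDiffOn ℝ (⊤:ℕ∞) θ' (ball (0:Euc n) ε))
    (hf₀ : ContDiffOn ℝ (⊤:ℕ∞) f₀ (ball (0:Euc n) ε))
    (hθe : ∀ x ∈ ball (0:Euc n) ε, ∀ γ : G, θ (ρ γ x) = ρ γ (θ x))
    (hθ'e : ∀ x ∈ ball (0:Euc n) ε, ∀ γ : G, θ' (ρ γ x) = ρ γ (θ' x))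
    (hθ0 : θ 0 = 0)
    (hid : ∀ x ∈ ball (0:Euc n) δ, θ' (θ x) = x)
    (hid' : ∀ x ∈ ball (0:Euc n) δ, θ (θ' x) = x)
    (hχs : SmoothNear χ) (hχe : EqvNear ρ χ) :
    ∃ χ' : Euc n → Euc n, SmoothNear χ' ∧ EqvNear ρ χ' ∧
      (fun y => ⟪χ (θ y), gradient f₀ (θ y)⟫) =ᶠ[𝓝 (0:Euc n)]
        (fun y => ⟪χ' y, gradient (fun z => f₀ (θ z)) y⟫) := by
  obtain ⟨r, hr, hχball⟩ := smoothNear_ball hχs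
  obtain ⟨r₂, hr₂, hχeb⟩ := eventually_ball' hχe
  have hε : 0 < ε := lt_of_lt_of_le hδ hδε
  have hθc : ContinuousAt θ 0 := contDiffOn_ball_continuousAt hε hθs
  have hmpos : 0 < min δ (min r r₂) := lt_min hδ (lt_min hr hr₂)
  obtain ⟨η, hη, hηδ, hmapη⟩ := shrink' hθc hθ0 hmpos hδ
  have hηε : η ≤ ε := hηδ.trans hδε
  have hmδ : ∀ y ∈ ball (0:Euc n) η, θ y ∈ ball (0:Euc n) δ :=
    fun y hy => ball_subset_ball (min_le_left _ _) (hmapη y hy)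
  have hmr : ∀ y ∈ ball (0:Euc n) η, θ y ∈ ball (0:Euc n) r :=
    fun y hy => ball_subset_ball ((min_le_right _ _).trans (min_le_left _ _)) (hmapη y hy)
  have hmr₂ : ∀ y ∈ ball (0:Euc n) η, θ y ∈ ball (0:Euc n) r₂ :=
    fun y hy => ball_subset_ball ((min_le_right _ _).trans (min_le_right _ _)) (hmapη y hy)
  have hmε : ∀ y ∈ ball (0:Euc n) η, θ y ∈ ball (0:Euc n) ε :=
    fun y hy => ball_subset_ball hδε (hmδ y hy)
  refine ⟨fun y => fderiv ℝ θ' (θ y) (χ (θ y)), ?_, ?_, ?_⟩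
  · -- smoothness
    refine ⟨ball 0 η, ball_mem_nhds _ hη, ?_⟩
    have h1 : ContDiffOn ℝ (⊤:ℕ∞) (fderiv ℝ θ') (ball (0:Euc n) ε) :=
      hθ's.fderiv_of_isOpen isOpen_ball (by simp)
    have hA : ContDiffOn ℝ (⊤:ℕ∞) (fun y => fderiv ℝ θ' (θ y)) (ball (0:Euc n) η) :=
      h1.comp (hθs.mono (ball_subset_ball hηε)) hmε
    have hB : ContDiffOn ℝ (⊤:ℕ∞) (fun y => χ (θ y)) (ball (0:Euc n) η) :=
      hχball.comp (hθs.mono (ball_subset_ball hηε)) hmr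
    exact hA.clm_apply hB
  · -- equivariance
    refine Filter.eventually_of_mem (ball_mem_nhds _ hη) (fun y hy γ => ?_)
    show fderiv ℝ θ' (θ (ρ γ y)) (χ (θ (ρ γ y))) = ρ γ (fderiv ℝ θ' (θ y) (χ (θ y)))
    have hyε : y ∈ ball (0:Euc n) ε := ball_subset_ball hηε hy
    rw [hθe y hyε γ, hχeb (θ y) (hmr₂ y hy) γ]
    exact fderiv_eqv_s16 ρ hθ's hθ'e (θ y) (hmε y hy) γ (χ (θ y))
  · -- the germ identity
    refine Filter.eventually_of_mem (ball_mem_nhds _ hη) (fun y hy => ?_)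
    have hyδ : y ∈ ball (0:Euc n) δ := ball_subset_ball hηδ hy
    have hyε : y ∈ ball (0:Euc n) ε := ball_subset_ball hδε hyδ
    have hθyδ : θ y ∈ ball (0:Euc n) δ := hmδ y hy
    have hθyε : θ y ∈ ball (0:Euc n) ε := hmε y hy
    have dθ : DifferentiableAt ℝ θ y := diffAt_of_ball hθs hyε
    have df₀ : DifferentiableAt ℝ f₀ (θ y) := diffAt_of_ball hf₀ hθyε
    have dθ' : DifferentiableAt ℝ θ' (θ y) := diffAt_of_ball hθ's hθyε
    have hrinv : fderiv ℝ θ y (fderiv ℝ θ' (θ y) (χ (θ y))) = χ (θ y) := by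
      have hEq : (fun z => θ (θ' z)) =ᶠ[𝓝 (θ y)] id :=
        Filter.eventuallyEq_of_mem (isOpen_ball.mem_nhds hθyδ) (fun z hz => hid' z hz)
      have dθat : DifferentiableAt ℝ θ (θ' (θ y)) := by
        rw [hid y hyδ]; exact dθ
      have hcomp : fderiv ℝ (fun z => θ (θ' z)) (θ y)
          = (fderiv ℝ θ (θ' (θ y))).comp (fderiv ℝ θ' (θ y)) :=
        fderiv_comp (θ y) dθat dθ'
      have hidL : (fderiv ℝ θ (θ' (θ y))).comp (fderiv ℝ θ' (θ y))
          = ContinuousLinearMap.id ℝ (Euc n) := by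
        rw [← hcomp, hEq.fderiv_eq, fderiv_id]
      have happ := congrArg (fun L : Euc n →L[ℝ] Euc n => L (χ (θ y))) hidL
      simp only [ContinuousLinearMap.coe_comp', Function.comp_apply,
        ContinuousLinearMap.coe_id', id_eq] at happ
      rw [hid y hyδ] at happ
      exact happ
    show ⟪χ (θ y), gradient f₀ (θ y)⟫
        = ⟪fderiv ℝ θ' (θ y) (χ (θ y)), gradient (fun z => f₀ (θ z)) y⟫
    rw [inner_gradient, inner_gradient]
    have hch : fderiv ℝ (fun z => f₀ (θ z)) y = (fderiv ℝ f₀ (θ y)).comp (fderiv ℝ θ y) :=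
      fderiv_comp y df₀ dθ
    rw [hch]
    simp only [ContinuousLinearMap.coe_comp', Function.comp_apply]
    rw [hrinv]

lemma ofFun_eq {α β : Type} {l : Filter α} {f g : α → β} :
    Filter.Germ.ofFun (l := l) f = Filter.Germ.ofFun g ↔ f =ᶠ[l] g :=
  Filter.Germ.coe_eq

lemma ofFun_add {α β : Type} {l : Filter α} [Add β] (f g : α → β) :
    (Filter.Germ.ofFun (l := l) (fun x => f x + g x))
      = Filter.Germ.ofFun f + Filter.Germ.ofFun g := rfl

end Helpers

set_option maxHeartbeats 1000000 in
/-- composing a Γ-transversal unfolding with `φ ∈ Lₙ(Γ)` in the variables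
yields a Γ-transversal unfolding of `f ∘ φ`. -/
theorem statement16 {n r : ℕ} {G : Type} [Group G] [TopologicalSpace G]
    [IsTopologicalGroup G] [CompactSpace G]
    (ρ : G →* (Euc n ≃ₗᵢ[ℝ] Euc n))
    (f : Euc n → ℝ) (hf : SmoothNear f) (hfinv : InvNear ρ f) (hf0 : f 0 = 0)
    (F : Euc n × Euc r → ℝ) (hF : IsUnfolding ρ f F) (hFt : Transversal ρ f F)
    (φ : Euc n → Euc n) (hφ : LnG ρ φ) :
    IsUnfolding ρ (fun x => f (φ x)) (fun p : Euc n × Euc r => F (φ p.1, p.2)) ∧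
      Transversal ρ (fun x => f (φ x)) (fun p : Euc n × Euc r => F (φ p.1, p.2)) := by
  open Metric in
  obtain ⟨hFsm, hFf, hFinv⟩ := hF
  obtain ⟨⟨hφsm, hφ0, ψ, hψsm, hψ0, hψφ, hφψ⟩, hφeqv⟩ := hφ
  obtain ⟨eφ, heφ, hφball⟩ := smoothNear_ball hφsm
  have hφc : ContinuousAt φ 0 := contDiffOn_ball_continuousAt heφ hφball
  obtain ⟨eψ, heψ, hψball⟩ := smoothNear_ball hψsm
  have hψc : ContinuousAt ψ 0 := contDiffOn_ball_continuousAt heψ hψball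
  have hφt : Filter.Tendsto φ (𝓝 0) (𝓝 (0 : Euc n)) := by
    have := hφc; rwa [ContinuousAt, hφ0] at this
  have hψt : Filter.Tendsto ψ (𝓝 0) (𝓝 (0 : Euc n)) := by
    have := hψc; rwa [ContinuousAt, hψ0] at this
  constructor
  · -- IsUnfolding
    refine ⟨?_, ?_, ?_⟩
    · -- SmoothNear
      obtain ⟨V, hV, hFcd⟩ := hFsm
      have h1c : ContinuousAt (fun p : Euc n × Euc r => φ p.1) 0 :=
        ContinuousAt.comp (f := (Prod.fst : Euc n × Euc r → Euc n)) hφc continuousAt_fst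
      have h2c : ContinuousAt (fun p : Euc n × Euc r => p.2) 0 := continuousAt_snd
      have hTc : ContinuousAt (fun p : Euc n × Euc r => ((φ p.1, p.2) : Euc n × Euc r)) 0 :=
        h1c.prodMk h2c
      have hT0 : ((φ (0:Euc n), (0:Euc r)) : Euc n × Euc r) = 0 := by
        rw [hφ0]; rfl
      have hpre : (fun p : Euc n × Euc r => ((φ p.1, p.2) : Euc n × Euc r)) ⁻¹' V
          ∈ 𝓝 (0 : Euc n × Euc r) := by
        apply hTc.preimage_mem_nhds
        show V ∈ 𝓝 ((φ (0:Euc n), (0:Euc r)) : Euc n × Euc r)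
        rwa [hT0]
      refine ⟨(ball (0:Euc n) eφ ×ˢ (Set.univ : Set (Euc r)))
          ∩ (fun p : Euc n × Euc r => ((φ p.1, p.2) : Euc n × Euc r)) ⁻¹' V,
        Filter.inter_mem ?_ hpre, ?_⟩
      · exact prod_mem_nhds (ball_mem_nhds _ heφ) Filter.univ_mem
      · have hTcd : ContDiffOn ℝ (⊤:ℕ∞)
            (fun p : Euc n × Euc r => ((φ p.1, p.2) : Euc n × Euc r))
            ((ball (0:Euc n) eφ ×ˢ (Set.univ : Set (Euc r)))
              ∩ (fun p : Euc n × Euc r => ((φ p.1, p.2) : Euc n × Euc r)) ⁻¹' V) := by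
          apply ContDiffOn.prodMk
          · exact hφball.comp (contDiff_fst.contDiffOn) (fun p hp => hp.1.1)
          · exact contDiff_snd.contDiffOn
        exact hFcd.comp hTcd (fun p hp => hp.2)
    · -- agrees with f ∘ φ at u = 0
      obtain ⟨v, hv, hvb⟩ := eventually_ball' hFf
      obtain ⟨η, hη, _, hmapη⟩ := shrink' hφc hφ0 hv hv
      exact Filter.eventually_of_mem (ball_mem_nhds _ hη)
        (fun x hx => hvb (φ x) (hmapη x hx))
    · -- invariance
      have hFinv' : {p : Euc n × Euc r | ∀ γ : G, F (ρ γ p.1, p.2) = F p}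
          ∈ (𝓝 (0:Euc n)) ×ˢ (𝓝 (0:Euc r)) := by
        rw [← nhds_prod_eq]; exact hFinv
      obtain ⟨A, hA, Bset, hB, hAB⟩ := Filter.mem_prod_iff.1 hFinv'
      obtain ⟨α, hα, hαA⟩ := Metric.mem_nhds_iff.1 hA
      obtain ⟨η, hη, _, hmapη⟩ := shrink' hφc hφ0 hα hα
      obtain ⟨εe, hεe, heqb⟩ := eventually_ball' hφeqv
      have hmem : (ball (0:Euc n) (min η εe) ×ˢ Bset) ∈ 𝓝 (0 : Euc n × Euc r) := by
        have h := Filter.prod_mem_prod (ball_mem_nhds (0:Euc n) (lt_min hη hεe)) hB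
        rw [← nhds_prod_eq] at h
        exact h
      refine Filter.eventually_of_mem hmem (fun p hp γ => ?_)
      obtain ⟨hp1, hp2⟩ := hp
      show F (φ (ρ γ p.1), p.2) = F (φ p.1, p.2)
      rw [heqb p.1 (ball_subset_ball (min_le_right _ _) hp1) γ]
      exact hAB (Set.mk_mem_prod (hαA (hmapη p.1 (ball_subset_ball (min_le_left _ _) hp1))) hp2) γ
  · -- Transversality
    obtain ⟨a1, ha1, hfball⟩ := smoothNear_ball hf
    obtain ⟨a2, ha2, hfinvb⟩ := eventually_ball' hfinv
    obtain ⟨a3, ha3, hφeqb⟩ := eventually_ball' hφeqv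
    obtain ⟨a4, ha4, hψφb⟩ := eventually_ball' hψφ
    obtain ⟨a5, ha5, hφψb⟩ := eventually_ball' hφψ
    set ε₁ : ℝ := min a1 (min a2 (min a3 (min a4 (min a5 (min eφ eψ))))) with hε₁def
    have hε₁ : 0 < ε₁ :=
      lt_min ha1 (lt_min ha2 (lt_min ha3 (lt_min ha4 (lt_min ha5 (lt_min heφ heψ)))))
    have l1 : ε₁ ≤ a1 := min_le_left _ _
    have l2' : ε₁ ≤ min a2 (min a3 (min a4 (min a5 (min eφ eψ)))) := min_le_right _ _
    have l2 : ε₁ ≤ a2 := l2'.trans (min_le_left _ _)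
    have l3' : ε₁ ≤ min a3 (min a4 (min a5 (min eφ eψ))) := l2'.trans (min_le_right _ _)
    have l3 : ε₁ ≤ a3 := l3'.trans (min_le_left _ _)
    have l4' : ε₁ ≤ min a4 (min a5 (min eφ eψ)) := l3'.trans (min_le_right _ _)
    have l4 : ε₁ ≤ a4 := l4'.trans (min_le_left _ _)
    have l5' : ε₁ ≤ min a5 (min eφ eψ) := l4'.trans (min_le_right _ _)
    have l5 : ε₁ ≤ a5 := l5'.trans (min_le_left _ _)
    have l6' : ε₁ ≤ min eφ eψ := l5'.trans (min_le_right _ _)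
    have l6 : ε₁ ≤ eφ := l6'.trans (min_le_left _ _)
    have l7 : ε₁ ≤ eψ := l6'.trans (min_le_right _ _)
    have Hf : ContDiffOn ℝ (⊤:ℕ∞) f (ball (0:Euc n) ε₁) :=
      hfball.mono (ball_subset_ball l1)
    have Hφe : ∀ x ∈ ball (0:Euc n) ε₁, ∀ γ : G, φ (ρ γ x) = ρ γ (φ x) :=
      fun x hx => hφeqb x (ball_subset_ball l3 hx)
    have Hψφ : ∀ x ∈ ball (0:Euc n) ε₁, ψ (φ x) = x :=
      fun x hx => hψφb x (ball_subset_ball l4 hx)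
    have Hφψ : ∀ x ∈ ball (0:Euc n) ε₁, φ (ψ x) = x :=
      fun x hx => hφψb x (ball_subset_ball l5 hx)
    have Hφs : ContDiffOn ℝ (⊤:ℕ∞) φ (ball (0:Euc n) ε₁) :=
      hφball.mono (ball_subset_ball l6)
    have Hψs : ContDiffOn ℝ (⊤:ℕ∞) ψ (ball (0:Euc n) ε₁) :=
      hψball.mono (ball_subset_ball l7)
    obtain ⟨b1, hb1, hb1le, hmφ1⟩ := shrink' hφc hφ0 hε₁ hε₁
    obtain ⟨b2, hb2, hb2le, hmψ1⟩ := shrink' hψc hψ0 hε₁ hε₁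
    set ε₂ : ℝ := min b1 b2 with hε₂def
    have hε₂ : 0 < ε₂ := lt_min hb1 hb2
    have hε₂1 : ε₂ ≤ ε₁ := (min_le_left _ _).trans hb1le
    have Hmφ : ∀ x ∈ ball (0:Euc n) ε₂, φ x ∈ ball (0:Euc n) ε₁ :=
      fun x hx => hmφ1 x (ball_subset_ball (min_le_left _ _) hx)
    have Hmψ : ∀ x ∈ ball (0:Euc n) ε₂, ψ x ∈ ball (0:Euc n) ε₁ :=
      fun x hx => hmψ1 x (ball_subset_ball (min_le_right _ _) hx)
    have Hψe2 : ∀ x ∈ ball (0:Euc n) ε₂, ∀ γ : G, ψ (ρ γ x) = ρ γ (ψ x) :=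
      inverse_eqv ρ hε₂1 Hφe Hψφ Hφψ Hmψ
    have HψeN : EqvNear ρ ψ := Filter.eventually_of_mem (ball_mem_nhds _ hε₂) Hψe2
    have Hφe2 : ∀ x ∈ ball (0:Euc n) ε₂, ∀ γ : G, φ (ρ γ x) = ρ γ (φ x) :=
      fun x hx => Hφe x (ball_subset_ball hε₂1 hx)
    have Hφs2 : ContDiffOn ℝ (⊤:ℕ∞) φ (ball (0:Euc n) ε₂) :=
      Hφs.mono (ball_subset_ball hε₂1)
    have Hψs2 : ContDiffOn ℝ (⊤:ℕ∞) ψ (ball (0:Euc n) ε₂) :=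
      Hψs.mono (ball_subset_ball hε₂1)
    have Hf2 : ContDiffOn ℝ (⊤:ℕ∞) f (ball (0:Euc n) ε₂) :=
      Hf.mono (ball_subset_ball hε₂1)
    have Hg : ContDiffOn ℝ (⊤:ℕ∞) (fun z => f (φ z)) (ball (0:Euc n) ε₂) :=
      Hf.comp Hφs2 Hmφ
    obtain ⟨c1, hc1, hc1le, hmφ2⟩ := shrink' hφc hφ0 hε₂ hε₂
    obtain ⟨c2, hc2, hc2le, hmψ2⟩ := shrink' hψc hψ0 hε₂ hε₂
    set ε₃ : ℝ := min c1 c2 with hε₃def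
    have hε₃ : 0 < ε₃ := lt_min hc1 hc2
    have hε₃2 : ε₃ ≤ ε₂ := (min_le_left _ _).trans hc1le
    have hε₃1 : ε₃ ≤ ε₁ := hε₃2.trans hε₂1
    have Hψφ3 : ∀ x ∈ ball (0:Euc n) ε₃, ψ (φ x) = x :=
      fun x hx => Hψφ x (ball_subset_ball hε₃1 hx)
    have Hφψ3 : ∀ x ∈ ball (0:Euc n) ε₃, φ (ψ x) = x :=
      fun x hx => Hφψ x (ball_subset_ball hε₃1 hx)
    have hFtEq : EnG ρ = TOrbExt ρ f + SpanAlpha F := hFt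
    show EnG ρ = TOrbExt ρ (fun x => f (φ x))
        + SpanAlpha (fun p : Euc n × Euc r => F (φ p.1, p.2))
    refine Set.Subset.antisymm ?_ ?_
    · -- ⊆
      intro h hmem
      obtain ⟨e, hes, hei, rfl⟩ := hmem
      have he₁ : Filter.Germ.ofFun (fun y => e (ψ y)) ∈ TOrbExt ρ f + SpanAlpha F := by
        rw [← hFtEq]
        exact ⟨fun y => e (ψ y), smoothNear_comp hes hψsm hψ0,
          invNear_comp ρ hei hψc hψ0 HψeN, rfl⟩
      obtain ⟨t, ht, s, hs, hts⟩ := Set.mem_add.1 he₁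
      obtain ⟨χ, hχs, hχe, rfl⟩ := ht
      obtain ⟨c, b, rfl⟩ := hs
      obtain ⟨χ', hχ's, hχ'e, hident⟩ :=
        transfer ρ hε₃ hε₃2 Hφs2 Hψs2 Hf2 Hφe2 Hψe2 hφ0 Hψφ3 Hφψ3 hχs hχe
      have heq : (fun y => e (ψ y)) =ᶠ[𝓝 (0:Euc n)]
          (fun y => (⟪χ y, gradient f y⟫) + (c + ∑ i, b i * alphaU F i y)) := by
        apply ofFun_eq.1
        rw [ofFun_add]
        exact hts.symm
      have hcomp : (fun y => e (ψ (φ y))) =ᶠ[𝓝 (0:Euc n)]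
          (fun y => (⟪χ (φ y), gradient f (φ y)⟫) + (c + ∑ i, b i * alphaU F i (φ y))) :=
        heq.comp_tendsto hφt
      have hid₁ : (fun y => e (ψ (φ y))) =ᶠ[𝓝 (0:Euc n)] e :=
        Filter.eventually_of_mem (ball_mem_nhds _ hε₁)
          (fun y hy => congrArg e (Hψφ y hy))
      have hfinal : e =ᶠ[𝓝 (0:Euc n)]
          (fun y => (⟪χ' y, gradient (fun z => f (φ z)) y⟫)
            + (c + ∑ i, b i * alphaU F i (φ y))) :=
        (hid₁.symm.trans hcomp).trans (hident.add Filter.EventuallyEq.rfl)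
      refine Set.mem_add.2
        ⟨Filter.Germ.ofFun (fun y => ⟪χ' y, gradient (fun x => f (φ x)) y⟫),
          ⟨χ', hχ's, hχ'e, rfl⟩,
          Filter.Germ.ofFun (fun y => c + ∑ i,
            b i * alphaU (fun p : Euc n × Euc r => F (φ p.1, p.2)) i y),
          ⟨c, b, rfl⟩, ?_⟩
      rw [← ofFun_add]
      exact (ofFun_eq.2 hfinal).symm
    · -- ⊇
      intro h hmem
      obtain ⟨t, ht, s, hs, hts⟩ := Set.mem_add.1 hmem
      obtain ⟨χ, hχs, hχe, rfl⟩ := ht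
      obtain ⟨c, b, rfl⟩ := hs
      obtain ⟨χ₂, hχ₂s, hχ₂e, hident⟩ :=
        transfer ρ hε₃ hε₃2 Hψs2 Hφs2 Hg Hψe2 Hφe2 hψ0 Hφψ3 Hψφ3 hχs hχe
      have hgrad : ∀ y ∈ ball (0:Euc n) ε₂,
          gradient (fun z => (fun w => f (φ w)) (ψ z)) y = gradient f y := by
        intro y hy
        refine gradient_congr_ball (ε := ε₁) (fun z hz => ?_) (ball_subset_ball hε₂1 hy)
        show f (φ (ψ z)) = f z
        rw [Hφψ z hz]
      have hident' : (fun y => ⟪χ (ψ y), gradient (fun x => f (φ x)) (ψ y)⟫)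
          =ᶠ[𝓝 (0:Euc n)] (fun y => ⟪χ₂ y, gradient f y⟫) := by
        refine hident.trans ?_
        exact Filter.eventually_of_mem (ball_mem_nhds _ hε₂)
          (fun y hy => congrArg (fun w => (⟪χ₂ y, w⟫ : ℝ)) (hgrad y hy))
      have hspan : (fun y => c + ∑ i,
            b i * alphaU (fun p : Euc n × Euc r => F (φ p.1, p.2)) i (ψ y))
          =ᶠ[𝓝 (0:Euc n)] (fun y => c + ∑ i, b i * alphaU F i y) := by
        refine Filter.eventually_of_mem (ball_mem_nhds _ hε₂) (fun y hy => ?_)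
        have halp : ∀ i, alphaU (fun p : Euc n × Euc r => F (φ p.1, p.2)) i (ψ y)
            = alphaU F i y := by
          intro i
          show gradient (fun u => F (φ (ψ y), u)) 0 i = gradient (fun u => F (y, u)) 0 i
          rw [Hφψ y (ball_subset_ball hε₂1 hy)]
        simp only [halp]
      have hin : Filter.Germ.ofFun (fun y =>
            (⟪χ (ψ y), gradient (fun x => f (φ x)) (ψ y)⟫)
            + (c + ∑ i, b i * alphaU (fun p : Euc n × Euc r => F (φ p.1, p.2)) i (ψ y)))
          ∈ EnG ρ := by
        rw [hFtEq]
        refine Set.mem_add.2 ⟨Filter.Germ.ofFun (fun y => ⟪χ₂ y, gradient f y⟫),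
          ⟨χ₂, hχ₂s, hχ₂e, rfl⟩,
          Filter.Germ.ofFun (fun y => c + ∑ i, b i * alphaU F i y), ⟨c, b, rfl⟩, ?_⟩
        rw [← ofFun_add]
        exact (ofFun_eq.2 (hident'.add hspan)).symm
      obtain ⟨e', he's, he'i, heqr⟩ := hin
      have heqr' : (fun y =>
            (⟪χ (ψ y), gradient (fun x => f (φ x)) (ψ y)⟫)
            + (c + ∑ i, b i * alphaU (fun p : Euc n × Euc r => F (φ p.1, p.2)) i (ψ y)))
          =ᶠ[𝓝 (0:Euc n)] e' := ofFun_eq.1 heqr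
      have hcompφ : (fun y =>
            (⟪χ (ψ (φ y)), gradient (fun x => f (φ x)) (ψ (φ y))⟫)
            + (c + ∑ i, b i * alphaU (fun p : Euc n × Euc r => F (φ p.1, p.2)) i (ψ (φ y))))
          =ᶠ[𝓝 (0:Euc n)] (fun y => e' (φ y)) := heqr'.comp_tendsto hφt
      have hback : (fun y =>
            (⟪χ y, gradient (fun x => f (φ x)) y⟫)
            + (c + ∑ i, b i * alphaU (fun p : Euc n × Euc r => F (φ p.1, p.2)) i y))
          =ᶠ[𝓝 (0:Euc n)] (fun y => e' (φ y)) := by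
        refine Filter.EventuallyEq.trans ?_ hcompφ
        exact Filter.eventually_of_mem (ball_mem_nhds _ hε₁)
          (fun y hy => (congrArg (fun z => (⟪χ z, gradient (fun x => f (φ x)) z⟫ : ℝ)
            + (c + ∑ i, b i * alphaU (fun p : Euc n × Euc r => F (φ p.1, p.2)) i z))
            (Hψφ y hy)).symm)
      rw [← hts, ← ofFun_add]
      exact ⟨fun y => e' (φ y), smoothNear_comp he's hφsm hφ0,
        invNear_comp ρ he'i hφc hφ0 hφeqv, ofFun_eq.2 hback⟩

end
end
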